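/- Let p > 1, c > 0, and h : (0, s̄) → (0, ∞) be continuous. Suppose I : (0, s̄) → [0, ∞) is differentiable, nonincreasing, and satisfies I(s) ≤ c · h(s)^{-1/(p+1)} · (-I'(s))^{(p+3)/(2(p+1))} for all s ∈ (0, s̄). Then there is a constant d (depending only on c and p, not on I) such that I(s) ≤ d · (∫₀ˢ h(r)^{2/(p+3)} dr)^{-(p+3)/(p-1)} for all s ∈ (0, s̄). -/

import Mathlib

open MeasureTheory Real Filter

private lemma deriv_nonpos_aux {U : Set ℝ} (hU : IsOpen U) {I : ℝ → ℝ} {t y : ℝ}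
    (ht : t ∈ U) (hA : AntitoneOn I U) (hd : HasDerivAt I y t) : y ≤ 0 := by
  have h1 : Filter.Tendsto (slope I t) (nhdsWithin t (Set.Ioi t)) (nhds y) :=
    (hasDerivAt_iff_tendsto_slope.mp hd).mono_left
      (nhdsWithin_mono t fun x hx => ne_of_gt hx)
  refine le_of_tendsto h1 ?_
  filter_upwards [self_mem_nhdsWithin,
    (hU.eventually_mem ht).filter_mono nhdsWithin_le_nhds] with x hx hxU
  rw [slope_def_field]
  exact div_nonpos_of_nonpos_of_nonneg (sub_nonpos.2 (hA ht hxU (le_of_lt hx)))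
    (sub_nonneg.2 (le_of_lt hx))

theorem stmt1 (p c : ℝ) (hp : 1 < p) (hc : 0 < c) :
    ∃ d : ℝ, ∀ sbar : ℝ, 0 < sbar →
      ∀ h : ℝ → ℝ, ContinuousOn h (Set.Ioo 0 sbar) →
        (∀ s ∈ Set.Ioo (0:ℝ) sbar, 0 < h s) →
      ∀ I I' : ℝ → ℝ,
        (∀ s ∈ Set.Ioo (0:ℝ) sbar, 0 ≤ I s) →
        (∀ s ∈ Set.Ioo (0:ℝ) sbar, HasDerivAt I (I' s) s) →
        AntitoneOn I (Set.Ioo 0 sbar) →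
        (∀ s ∈ Set.Ioo (0:ℝ) sbar,
          I s ≤ c * h s ^ (-(1:ℝ)/(p+1)) * (-I' s) ^ ((p+3)/(2*(p+1)))) →
        ∀ s ∈ Set.Ioo (0:ℝ) sbar,
          I s ≤ d * (∫ r in Set.Ioo (0:ℝ) s, h r ^ ((2:ℝ)/(p+3))) ^ (-(p+3)/(p-1)) := by
  have hp1 : (0:ℝ) < p + 1 := by linarith
  have hp3 : (0:ℝ) < p + 3 := by linarith
  have hpm : (0:ℝ) < p - 1 := by linarith
  set β : ℝ := (p-1)/(p+3) with hβdef
  set γ : ℝ := 2*(p+1)/(p+3) with hγdef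
  set K : ℝ := c ^ (-γ) with hKdef
  have hβ : 0 < β := div_pos hpm hp3
  have hK : 0 < K := rpow_pos_of_pos hc _
  have hβK : 0 < β * K := mul_pos hβ hK
  refine ⟨(β * K) ^ (-(p+3)/(p-1)), ?_⟩
  intro sbar hsbar h hcont hpos I I' hI0 hId hIa hIneq s hs
  have hd : (0:ℝ) < (β*K) ^ (-(p+3)/(p-1)) := rpow_pos_of_pos hβK _
  set g : ℝ → ℝ := fun r => h r ^ ((2:ℝ)/(p+3)) with hgdef
  have gcont : ContinuousOn g (Set.Ioo 0 sbar) :=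
    hcont.rpow_const (fun x hx => Or.inl (ne_of_gt (hpos x hx)))
  have gnonneg : ∀ r ∈ Set.Ioo (0:ℝ) sbar, 0 ≤ g r := fun r hr => rpow_nonneg (hpos r hr).le _
  have hIoo : Set.Ioo (0:ℝ) s ⊆ Set.Ioo 0 sbar := Set.Ioo_subset_Ioo le_rfl hs.2.le
  have hX0 : 0 ≤ ∫ r in Set.Ioo (0:ℝ) s, g r :=
    setIntegral_nonneg measurableSet_Ioo (fun r hr => gnonneg r (hIoo hr))
  rcases le_or_gt (I s) 0 with hIs | hIs
  · exact hIs.trans (mul_nonneg hd.le (rpow_nonneg hX0 _))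
  have hspos : 0 < s := hs.1
  -- positivity of I on (0, s]
  have hIt : ∀ t ∈ Set.Ioo (0:ℝ) sbar, t ≤ s → 0 < I t :=
    fun t ht hts => lt_of_lt_of_le hIs (hIa ht hs hts)
  -- key derivative inequality
  have keyder : ∀ t ∈ Set.Ioo (0:ℝ) sbar, t ≤ s →
      β * K * g t ≤ I' t * -β * I t ^ (-β-1) := by
    intro t ht hts
    have hIt' : 0 < I t := hIt t ht hts
    have hht : 0 < h t := hpos t ht
    have hI'le : I' t ≤ 0 := deriv_nonpos_aux isOpen_Ioo ht hIa (hId t ht)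
    have hnI' : 0 ≤ -I' t := neg_nonneg.2 hI'le
    have hγpos : 0 < γ := by rw [hγdef]; positivity
    -- raise hypothesis to power γ
    have h0 := hIneq t ht
    have hA : (0:ℝ) ≤ c * h t ^ (-(1:ℝ)/(p+1)) := by positivity
    have h1 : I t ^ γ ≤ (c * h t ^ (-(1:ℝ)/(p+1)) * (-I' t) ^ ((p+3)/(2*(p+1)))) ^ γ :=
      rpow_le_rpow hIt'.le h0 hγpos.le
    have h2 : (c * h t ^ (-(1:ℝ)/(p+1)) * (-I' t) ^ ((p+3)/(2*(p+1)))) ^ γ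
        = c ^ γ * h t ^ (-((2:ℝ)/(p+3))) * (-I' t) := by
      rw [mul_rpow hA (rpow_nonneg hnI' _), mul_rpow hc.le (rpow_nonneg hht.le _),
        ← rpow_mul hht.le, ← rpow_mul hnI']
      have e1 : (-(1:ℝ)/(p+1)) * γ = -((2:ℝ)/(p+3)) := by
        rw [hγdef]; field_simp
      have e2 : ((p+3)/(2*(p+1))) * γ = 1 := by
        rw [hγdef]; field_simp
      rw [e1, e2, rpow_one]
    have h3 : I t ^ γ ≤ c ^ γ * h t ^ (-((2:ℝ)/(p+3))) * (-I' t) := h2 ▸ h1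
    have hKg : 0 ≤ K * I t ^ (-β-1) * g t := by positivity
    have h4 : K * I t ^ (-β-1) * g t * (I t ^ γ)
        ≤ K * I t ^ (-β-1) * g t * (c ^ γ * h t ^ (-((2:ℝ)/(p+3))) * (-I' t)) :=
      mul_le_mul_of_nonneg_left h3 hKg
    have hKc : K * c ^ γ = 1 := by
      rw [hKdef, ← rpow_add hc]; simp
    have hgh : g t * h t ^ (-((2:ℝ)/(p+3))) = 1 := by
      rw [hgdef]; dsimp only; rw [← rpow_add hht]; simp
    have hIγ : I t ^ (-β-1) * I t ^ γ = 1 := by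
      rw [← rpow_add hIt']
      have : -β - 1 + γ = 0 := by rw [hβdef, hγdef]; field_simp; ring
      rw [this, rpow_zero]
    calc β * K * g t = β * (K * I t ^ (-β-1) * g t * (I t ^ γ)) := by
          rw [show K * I t ^ (-β-1) * g t * (I t ^ γ)
              = (I t ^ (-β-1) * I t ^ γ) * (K * g t) by ring, hIγ]; ring
      _ ≤ β * (K * I t ^ (-β-1) * g t * (c ^ γ * h t ^ (-((2:ℝ)/(p+3))) * (-I' t))) :=
          mul_le_mul_of_nonneg_left h4 hβ.le
      _ = β * ((K * c ^ γ) * (g t * h t ^ (-((2:ℝ)/(p+3)))) * (I t ^ (-β-1)) * (-I' t)) := by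
          ring
      _ = I' t * -β * I t ^ (-β-1) := by rw [hKc, hgh]; ring
  -- integrated inequality for every s0 ∈ (0, s)
  have key : ∀ s0 ∈ Set.Ioo (0:ℝ) s, β * K * ∫ r in Set.Ioc s0 s, g r ≤ I s ^ (-β) := by
    intro s0 hs0
    have hsubS : Set.Icc s0 s ⊆ Set.Ioo 0 sbar := fun x hx =>
      ⟨lt_of_lt_of_le hs0.1 hx.1, lt_of_le_of_lt hx.2 hs.2⟩
    set F : ℝ → ℝ := fun t => I t ^ (-β) - β * K * ∫ r in s0..t, g r with hFdef
    have hFd : ∀ t ∈ Set.Icc s0 s,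
        HasDerivAt F (I' t * -β * I t ^ (-β-1) - β * K * g t) t := by
      intro t ht
      have htS := hsubS ht
      have h1 : HasDerivAt (fun x => I x ^ (-β)) (I' t * -β * I t ^ (-β-1)) t :=
        (hId t htS).rpow_const (Or.inl (hIt t htS ht.2).ne')
      have h2 : HasDerivAt (fun u => ∫ r in s0..u, g r) (g t) t := by
        apply intervalIntegral.integral_hasDerivAt_right
        · apply ContinuousOn.intervalIntegrable
          apply gcont.mono
          rw [Set.uIcc_of_le ht.1]
          exact fun x hx => hsubS ⟨hx.1, hx.2.trans ht.2⟩
        · exact AEStronglyMeasurable.stronglyMeasurableAtFilter_of_mem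
            (gcont.aestronglyMeasurable measurableSet_Ioo) (isOpen_Ioo.mem_nhds htS)
        · exact gcont.continuousAt (isOpen_Ioo.mem_nhds htS)
      exact h1.sub (HasDerivAt.const_mul (β * K) h2)
    have hmono : MonotoneOn F (Set.Icc s0 s) := by
      apply monotoneOn_of_deriv_nonneg (convex_Icc s0 s)
      · exact fun t ht => (hFd t ht).continuousAt.continuousWithinAt
      · intro t ht
        rw [interior_Icc] at ht
        exact (hFd t (Set.Ioo_subset_Icc_self ht)).differentiableAt.differentiableWithinAt
      · intro t ht
        rw [interior_Icc] at ht
        rw [(hFd t (Set.Ioo_subset_Icc_self ht)).deriv]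
        have htS := hsubS (Set.Ioo_subset_Icc_self ht)
        exact sub_nonneg.2 (keyder t htS ht.2.le)
    have hs0s : s0 ≤ s := hs0.2.le
    have h2 := hmono (Set.left_mem_Icc.2 hs0s) (Set.right_mem_Icc.2 hs0s) hs0s
    have hF0 : F s0 = I s0 ^ (-β) := by
      simp [hFdef, intervalIntegral.integral_same]
    have hFs : F s = I s ^ (-β) - β * K * ∫ r in Set.Ioc s0 s, g r := by
      rw [hFdef]; dsimp only; rw [intervalIntegral.integral_of_le hs0s]
    have hpos0 : 0 ≤ I s0 ^ (-β) := rpow_nonneg (hI0 s0 (hsubS ⟨le_rfl, hs0s⟩)) _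
    rw [hF0, hFs] at h2
    linarith
  -- the sequence s0 = s/(n+2) → 0
  set u : ℕ → ℝ := fun n => s / (n+2) with hudef
  have hu_pos : ∀ n, 0 < u n := fun n => div_pos hspos (by positivity)
  have hu_lt : ∀ n, u n < s := fun n => div_lt_self hspos (by
    have h0 : (0:ℝ) ≤ (n:ℝ) := Nat.cast_nonneg n
    linarith)
  have hu_mem : ∀ n, u n ∈ Set.Ioo (0:ℝ) s := fun n => ⟨hu_pos n, hu_lt n⟩
  have hu_anti : Antitone u := by
    intro m n hmn
    rw [hudef]
    dsimp only
    gcongr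
  have hu0 : Filter.Tendsto u Filter.atTop (nhds 0) := by
    have h1 : Filter.Tendsto (fun n : ℕ => (n:ℝ) + 2) Filter.atTop Filter.atTop :=
      tendsto_atTop_add_const_right _ 2 tendsto_natCast_atTop_atTop
    have h2 := h1.inv_tendsto_atTop
    have h3 := h2.const_mul s
    simpa [hudef, div_eq_mul_inv] using h3
  -- integrability on each Ioc (u n) s and the uniform bound
  have hIocsub : ∀ n, Set.Ioc (u n) s ⊆ Set.Ioo 0 sbar := fun n x hx =>
    ⟨lt_trans (hu_pos n) hx.1, lt_of_le_of_lt hx.2 hs.2⟩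
  have hfi : ∀ n, IntegrableOn g (Set.Ioc (u n) s) := by
    intro n
    have : IntegrableOn g (Set.Icc (u n) s) := by
      apply ContinuousOn.integrableOn_compact isCompact_Icc
      apply gcont.mono
      exact fun x hx => ⟨lt_of_lt_of_le (hu_pos n) hx.1, lt_of_le_of_lt hx.2 hs.2⟩
    exact this.mono_set Set.Ioc_subset_Icc_self
  have hbd : ∀ n, (∫ x in Set.Ioc (u n) s, g x) ≤ I s ^ (-β) / (β * K) := fun n =>
    (le_div_iff₀' hβK).2 (key (u n) (hu_mem n))
  have hIntOn : IntegrableOn g (Set.Ioc (0:ℝ) s) := by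
    apply integrableOn_Ioc_of_intervalIntegral_norm_bounded_left hfi hu0
      (l := Filter.atTop) (I := I s ^ (-β) / (β * K))
    apply Filter.Eventually.of_forall
    intro n
    have : (∫ x in Set.Ioc (u n) s, ‖g x‖) = ∫ x in Set.Ioc (u n) s, g x :=
      setIntegral_congr_fun measurableSet_Ioc fun x hx =>
        Real.norm_of_nonneg (gnonneg x (hIocsub n hx))
    rw [this]
    exact hbd n
  -- limit of the partial integrals
  have hUnion : (⋃ n, Set.Ioc (u n) s) = Set.Ioc (0:ℝ) s := by
    ext x
    simp only [Set.mem_iUnion, Set.mem_Ioc]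
    constructor
    · rintro ⟨n, h1, h2⟩
      exact ⟨(hu_pos n).trans h1, h2⟩
    · rintro ⟨h1, h2⟩
      obtain ⟨n, hn⟩ := (hu0.eventually_lt_const h1).exists
      exact ⟨n, hn, h2⟩
  have hmonoSets : Monotone (fun n => Set.Ioc (u n) s) := fun m n hmn =>
    Set.Ioc_subset_Ioc_left (hu_anti hmn)
  have htendI : Filter.Tendsto (fun n => ∫ x in Set.Ioc (u n) s, g x) Filter.atTop
      (nhds (∫ x in Set.Ioc (0:ℝ) s, g x)) := by
    have := tendsto_setIntegral_of_monotone (fun n => measurableSet_Ioc) hmonoSets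
      (hUnion ▸ hIntOn)
    rwa [hUnion] at this
  have hbound : (∫ x in Set.Ioc (0:ℝ) s, g x) ≤ I s ^ (-β) / (β * K) :=
    le_of_tendsto htendI (Filter.Eventually.of_forall hbd)
  have hXIoc : (∫ r in Set.Ioo (0:ℝ) s, g r) = ∫ r in Set.Ioc (0:ℝ) s, g r :=
    (integral_Ioc_eq_integral_Ioo).symm
  have hβKX : β * K * (∫ r in Set.Ioo (0:ℝ) s, g r) ≤ I s ^ (-β) := by
    rw [hXIoc]
    exact (le_div_iff₀' hβK).1 hbound
  -- positivity of the integral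
  have hXpos : 0 < ∫ r in Set.Ioo (0:ℝ) s, g r := by
    rw [hXIoc]
    have h0 : 0 < ∫ r in Set.Ioc (u 0) s, g r := by
      rw [setIntegral_pos_iff_support_of_nonneg_ae
        (ae_restrict_of_forall_mem measurableSet_Ioc fun x hx => gnonneg x (hIocsub 0 hx))
        (hfi 0)]
      have hsub : Set.Ioc (u 0) s ⊆ Function.support g := fun x hx =>
        (rpow_pos_of_pos (hpos x (hIocsub 0 hx)) _).ne'
      rw [Set.inter_eq_self_of_subset_right hsub, Real.volume_Ioc]
      exact ENNReal.ofReal_pos.2 (by linarith [hu_lt 0])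
    have hmono2 : (∫ r in Set.Ioc (u 0) s, g r) ≤ ∫ r in Set.Ioc (0:ℝ) s, g r := by
      apply setIntegral_mono_set hIntOn
      · exact ae_restrict_of_forall_mem measurableSet_Ioc fun x hx =>
          gnonneg x ⟨hx.1, lt_of_le_of_lt hx.2 hs.2⟩
      · exact (Set.Ioc_subset_Ioc_left (hu_pos 0).le).eventuallyLE
    linarith
  -- conclude: raise to the power -(p+3)/(p-1)
  set X : ℝ := ∫ r in Set.Ioo (0:ℝ) s, g r with hXdef
  have hz : -(p+3)/(p-1) ≤ 0 := by
    apply div_nonpos_of_nonpos_of_nonneg <;> linarith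
  have hfin := rpow_le_rpow_of_nonpos (mul_pos hβK hXpos) hβKX hz
  have hL : (I s ^ (-β)) ^ (-(p+3)/(p-1)) = I s := by
    rw [← rpow_mul hIs.le]
    have : -β * (-(p+3)/(p-1)) = 1 := by rw [hβdef]; field_simp
    rw [this, rpow_one]
  have hR : (β * K * X) ^ (-(p+3)/(p-1))
      = (β * K) ^ (-(p+3)/(p-1)) * X ^ (-(p+3)/(p-1)) :=
    mul_rpow hβK.le hXpos.le
  rw [hL, hR] at hfin
  exact hfin
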